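/- Let (Ω, 𝒜, P) be a probability space and f : Ω → ℝ a measurable function such that ω ↦ exp(t·f(ω)) is P-integrable for all t in some open interval around 0, with Var_P(f) > 0. Let m := ∫ f dP and, for C > 0, S_f(C) := sSup { ∫ f dQ : Q a probability measure with Q ≪ P and KL(Q‖P) ≤ C }. Then for every real k with k < √(2·Var_P(f)) there exists C₀ > 0 such that S_f(C) > m + k·√C for all C ∈ (0, C₀). In particular the coefficient √(2·Var_P(f)) in the small-radius expansion is sharp. -/

import Mathlib

open MeasureTheory ProbabilityTheory Filter Real
open scoped Classical Topology ENNReal NNReal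

/-- Young-type inequality: `a*b ≤ b log b - b + exp a` for `b ≥ 0`. -/
lemma young_log (a b : ℝ) (hb : 0 ≤ b) : a * b ≤ b * Real.log b - b + Real.exp a := by
  rcases eq_or_lt_of_le hb with h | h
  · simp [← h, (Real.exp_pos a).le]
  · have h1 := Real.add_one_le_exp (a - Real.log b)
    have h2 : Real.exp (a - Real.log b) * b = Real.exp a := by
      conv_lhs => rw [show b = Real.exp (Real.log b) from (Real.exp_log h).symm]
      rw [← Real.exp_add, Real.log_exp]
      ring_nf
    nlinarith [mul_le_mul_of_nonneg_right h1 h.le]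

/-- Quadratic bound for the entropy function near 1. -/
lemma entropy_quad_bound {δ : ℝ} (hδ0 : 0 < δ) (hδ1 : δ < 1) {x : ℝ} (hx : |x| ≤ δ) :
    (1 + x) * Real.log (1 + x) ≤ x + x ^ 2 / (2 * (1 - δ)) := by
  set c : ℝ := 1 / (2 * (1 - δ)) with hc
  have h1δ : (0:ℝ) < 1 - δ := by linarith
  have hc0 : 0 < c := by rw [hc]; positivity
  have h2c : 1 ≤ 2 * c := by
    rw [hc, mul_one_div, le_div_iff₀ (by linarith : (0:ℝ) < 2 * (1 - δ))]; nlinarith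
  set F : ℝ → ℝ := fun y => y + c * y ^ 2 - (1 + y) * Real.log (1 + y) with hF
  have hderiv : ∀ y : ℝ, -1 < y →
      HasDerivAt F (2 * c * y - Real.log (1 + y)) y := by
    intro y hy
    have h1 : HasDerivAt (fun z : ℝ => 1 + z) 1 y := (hasDerivAt_id y).const_add 1
    have hne : 1 + y ≠ 0 := by linarith
    have hlog : HasDerivAt (fun z : ℝ => Real.log (1 + z)) (1 / (1 + y)) y := by
      simpa using h1.log hne
    have hmul : HasDerivAt (fun z : ℝ => (1 + z) * Real.log (1 + z))
        (1 * Real.log (1 + y) + (1 + y) * (1 / (1 + y))) y := h1.mul hlog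
    have hsq : HasDerivAt (fun z : ℝ => z + c * z ^ 2) (1 + c * (2 * y)) y := by
      exact ((hasDerivAt_id' y).add (((hasDerivAt_pow 2 y)).const_mul c)).congr_deriv (by norm_num)
    have := hsq.sub hmul
    exact this.congr_deriv (by rw [mul_one_div_cancel hne]; ring)
  have habs := abs_le.mp hx
  -- F is monotone on [0, δ] and antitone on [-δ, 0], F 0 = 0
  have hF0 : F 0 = 0 := by simp [hF]
  rcases le_total 0 x with hx0 | hx0
  · -- monotone on [0, δ]
    have hmono : MonotoneOn F (Set.Icc 0 δ) := by
      apply monotoneOn_of_deriv_nonneg (convex_Icc 0 δ)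
      · apply ContinuousOn.sub (by fun_prop)
        apply ContinuousOn.mul (by fun_prop)
        apply ContinuousOn.log (by fun_prop)
        intro y hy
        simp only [Set.mem_Icc] at hy
        nlinarith [hy.1]
      · intro y hy
        rw [interior_Icc] at hy
        exact ((hderiv y (by nlinarith [hy.1])).differentiableAt).differentiableWithinAt
      · intro y hy
        rw [interior_Icc] at hy
        have hy1 : -1 < y := by nlinarith [hy.1]
        rw [(hderiv y hy1).deriv]
        have hlog_le : Real.log (1 + y) ≤ y := by
          have := Real.log_le_sub_one_of_pos (show (0:ℝ) < 1 + y by linarith)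
          linarith
        nlinarith [hy.1]
    have := hmono (Set.mem_Icc.mpr ⟨le_refl 0, hδ0.le⟩) (Set.mem_Icc.mpr ⟨hx0, habs.2⟩) hx0
    rw [hF0] at this
    have : 0 ≤ x + c * x ^ 2 - (1 + x) * Real.log (1 + x) := this
    rw [div_eq_mul_inv, ← one_div]
    linarith [this]
  · -- antitone on [-δ, 0]
    have hanti : AntitoneOn F (Set.Icc (-δ) 0) := by
      apply antitoneOn_of_deriv_nonpos (convex_Icc (-δ) 0)
      · apply ContinuousOn.sub (by fun_prop)
        apply ContinuousOn.mul (by fun_prop)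
        apply ContinuousOn.log (by fun_prop)
        intro y hy
        simp only [Set.mem_Icc] at hy
        nlinarith [hy.1]
      · intro y hy
        rw [interior_Icc] at hy
        exact ((hderiv y (by nlinarith [hy.1])).differentiableAt).differentiableWithinAt
      · intro y hy
        rw [interior_Icc] at hy
        have hy1 : -1 < y := by nlinarith [hy.1]
        rw [(hderiv y hy1).deriv]
        have h1y : 0 < 1 + y := by linarith
        have hlog_ge : y / (1 + y) ≤ Real.log (1 + y) := by
          have := Real.one_sub_inv_le_log_of_pos h1y
          have hinv : (1 + y)⁻¹ = 1 - y / (1 + y) := by field_simp; ring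
          rw [hinv] at this; linarith
        have hfrac : y / (1 - δ) ≤ y / (1 + y) := by
          rw [div_le_div_iff₀ (by linarith) h1y]
          nlinarith [hy.1, hy.2]
        have h2cy : 2 * c * y = y / (1 - δ) := by
          rw [hc, eq_div_iff (by linarith : (1:ℝ) - δ ≠ 0)]; field_simp
        rw [h2cy]
        linarith
    have := hanti (Set.mem_Icc.mpr ⟨habs.1, hx0⟩) (Set.mem_Icc.mpr ⟨neg_nonpos_of_nonneg hδ0.le, le_refl 0⟩) hx0
    rw [hF0] at this
    have : 0 ≤ x + c * x ^ 2 - (1 + x) * Real.log (1 + x) := this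
    rw [div_eq_mul_inv, ← one_div]
    linarith [this]


lemma integrable_of_bdd {Ω : Type*} [MeasurableSpace Ω] {P : Measure Ω} [IsFiniteMeasure P]
    {h : Ω → ℝ} (hm : AEStronglyMeasurable h P) {K : ℝ} (hK : ∀ ω, |h ω| ≤ K) :
    Integrable h P :=
  Integrable.mono' (integrable_const K) hm (ae_of_all _ fun ω => by
    simpa [Real.norm_eq_abs] using hK ω)

lemma sq_le_exp_add_exp_neg (u : ℝ) : u ^ 2 / 4 ≤ Real.exp u + Real.exp (-u) := by
  have key : ∀ v : ℝ, 0 ≤ v → v ^ 2 / 4 ≤ Real.exp v := by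
    intro v hv
    have h := Real.add_one_le_exp (v / 2)
    have hsq : Real.exp (v / 2) * Real.exp (v / 2) = Real.exp v := by
      rw [← Real.exp_add]; ring_nf
    have h2 : (1 + v / 2) * (1 + v / 2) ≤ Real.exp (v / 2) * Real.exp (v / 2) :=
      mul_le_mul (by linarith) (by linarith) (by linarith) (Real.exp_pos _).le
    nlinarith
  rcases le_total 0 u with hu | hu
  · have := key u hu
    nlinarith [Real.exp_pos (-u)]
  · have := key (-u) (by linarith)
    nlinarith [Real.exp_pos u]

lemma dv_bound {Ω : Type*} [MeasurableSpace Ω] (P Q : Measure Ω) [IsProbabilityMeasure P]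
    [IsProbabilityMeasure Q] {f : Ω → ℝ} {t C : ℝ} (ht : 0 < t)
    (hexp : Integrable (fun ω => Real.exp (t * f ω)) P) (hQP : Q ≪ P)
    (hllr : Integrable (llr Q P) Q) (hKL : ∫ ω, llr Q P ω ∂Q ≤ C) (hfQ : Integrable f Q) :
    ∫ ω, f ω ∂Q ≤ (C + (∫ ω, Real.exp (t * f ω) ∂P) - 1) / t := by
  set r : Ω → ℝ := fun ω => (Q.rnDeriv P ω).toReal with hr
  have hr_nn : ∀ ω, 0 ≤ r ω := fun ω => ENNReal.toReal_nonneg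
  have h1 : ∫ ω, r ω • (t * f ω) ∂P = ∫ ω, t * f ω ∂Q := MeasureTheory.integral_rnDeriv_smul hQP
  have h2 : ∫ ω, r ω • llr Q P ω ∂P = ∫ ω, llr Q P ω ∂Q := MeasureTheory.integral_rnDeriv_smul hQP
  have h3 : ∫ ω, r ω ∂P = 1 := by
    rw [hr, Measure.integral_toReal_rnDeriv hQP]; simp
  have hi1 : Integrable (fun ω => r ω • (t * f ω)) P :=
    (MeasureTheory.integrable_rnDeriv_smul_iff hQP).mpr (hfQ.const_mul t)
  have hi2 : Integrable (fun ω => r ω • llr Q P ω) P :=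
    (MeasureTheory.integrable_rnDeriv_smul_iff hQP).mpr hllr
  have hi3 : Integrable r P := Measure.integrable_toReal_rnDeriv
  have hpt : (fun ω => r ω • (t * f ω)) ≤
      fun ω => r ω • llr Q P ω - r ω + Real.exp (t * f ω) := by
    intro ω
    have := young_log (t * f ω) (r ω) (hr_nn ω)
    simp only [smul_eq_mul, llr_def]
    calc r ω * (t * f ω) = (t * f ω) * r ω := by ring
      _ ≤ r ω * Real.log (r ω) - r ω + Real.exp (t * f ω) := this
  have hmono := integral_mono hi1 ((hi2.sub hi3).add hexp) hpt
  simp only [Pi.add_apply, Pi.sub_apply] at hmono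
  have hi23 : Integrable (fun ω => r ω • llr Q P ω - r ω) P := hi2.sub hi3
  have h4 : ∫ a, (r a • llr Q P a - r a + Real.exp (t * f a)) ∂P
      = ((∫ ω, llr Q P ω ∂Q) - 1) + ∫ ω, Real.exp (t * f ω) ∂P := by
    rw [integral_add hi23 hexp, integral_sub hi2 hi3, h2, h3]
  rw [h1, h4, MeasureTheory.integral_const_mul] at hmono
  rw [le_div_iff₀ ht]
  linarith


/-- Kullback--Leibler divergence of `Q` from `P`: `∫ log (dQ/dP) dQ` when `Q ≪ P` and the
log-likelihood ratio is `Q`-integrable, and `⊤` otherwise. -/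
noncomputable def klDiv {Ω : Type*} [MeasurableSpace Ω] (Q P : Measure Ω) : EReal :=
  if Q ≪ P ∧ Integrable (llr Q P) Q then ((∫ ω, llr Q P ω ∂Q : ℝ) : EReal) else ⊤

/-- The KL-ball robust value `S_f(C)`: the supremum of `∫ f dQ` over probability measures
`Q ≪ P` with `KL(Q‖P) ≤ C`. -/
noncomputable def robustValue {Ω : Type*} [MeasurableSpace Ω] (P : Measure Ω) (f : Ω → ℝ)
    (C : ℝ) : ℝ :=
  sSup { x : ℝ | ∃ Q : Measure Ω, IsProbabilityMeasure Q ∧ Q ≪ P ∧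
    klDiv Q P ≤ (C : EReal) ∧ x = ∫ ω, f ω ∂Q }

/-- Sharpness of the small-KL expansion: for every `k < √(2 Var_P f)` there is `C₀ > 0`
such that `S_f(C) > m + k √C` for all `C ∈ (0, C₀)`. -/

lemma abs_clamp_le {K x : ℝ} (hK : 0 ≤ K) : |max (-K) (min K x)| ≤ |x| := by
  rw [abs_le]
  constructor
  · rcases le_total K x with h | h
    · rw [min_eq_left h]
      exact le_max_of_le_right (by nlinarith [neg_abs_le x, abs_nonneg x])
    · rw [min_eq_right h]
      exact le_max_of_le_right (neg_abs_le x)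
  · apply max_le
    · nlinarith [abs_nonneg x]
    · exact le_trans (min_le_right _ _) (le_abs_self x)

set_option maxHeartbeats 2000000 in
set_option maxHeartbeats 3000000 in
theorem sharp_small_KL_sharpness {Ω : Type*} [MeasurableSpace Ω] (P : Measure Ω)
    [IsProbabilityMeasure P] (f : Ω → ℝ) (hf : Measurable f)
    (hmgf : ∃ ε > 0, ∀ t : ℝ, |t| < ε → Integrable (fun ω => Real.exp (t * f ω)) P)
    (hvar : 0 < variance f P) :
    ∀ k : ℝ, k < Real.sqrt (2 * variance f P) →
      ∃ C₀ > (0 : ℝ), ∀ C : ℝ, C ∈ Set.Ioo 0 C₀ →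
        robustValue P f C > (∫ ω, f ω ∂P) + k * Real.sqrt C := by
  suffices H : ∀ k : ℝ, 0 ≤ k → k < Real.sqrt (2 * variance f P) →
      ∃ C₀ > (0 : ℝ), ∀ C : ℝ, C ∈ Set.Ioo 0 C₀ →
        robustValue P f C > (∫ ω, f ω ∂P) + k * Real.sqrt C by
    intro k hk
    obtain ⟨C₀, hC₀, hmain⟩ := H (max k 0) (le_max_right _ _)
      (max_lt hk (Real.sqrt_pos.mpr (by linarith)))
    refine ⟨C₀, hC₀, fun C hC => lt_of_le_of_lt ?_ (hmain C hC)⟩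
    have := mul_le_mul_of_nonneg_right (le_max_left k 0) (Real.sqrt_nonneg C)
    linarith
  intro k hk0 hk
  set m := ∫ ω, f ω ∂P with hm
  set σ2 := variance f P with hσ2def
  -- integrability of f and f²
  obtain ⟨ε₀, hε₀, hmgfall⟩ := hmgf
  set t : ℝ := ε₀ / 2 with ht_def
  have ht0 : 0 < t := by positivity
  have hexp : Integrable (fun ω => Real.exp (t * f ω)) P :=
    hmgfall t (by rw [abs_of_pos ht0]; simp [ht_def]; linarith)
  have hexpneg : Integrable (fun ω => Real.exp (-t * f ω)) P := by
    have := hmgfall (-t) (by rw [abs_neg, abs_of_pos ht0]; simp [ht_def]; linarith)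
    simpa using this
  clear_value t
  have hf2 : Integrable (fun ω => f ω ^ 2) P := by
    apply Integrable.mono' ((hexp.add hexpneg).const_mul (4 / t ^ 2))
      (hf.pow_const 2).aestronglyMeasurable
    refine ae_of_all _ fun ω => ?_
    simp only [Pi.add_apply]
    have h := sq_le_exp_add_exp_neg (t * f ω)
    have ht2 : (0:ℝ) < t ^ 2 := by positivity
    rw [Real.norm_eq_abs, abs_of_nonneg (sq_nonneg _), div_mul_eq_mul_div, le_div_iff₀ ht2]
    have hexpand : (t * f ω) ^ 2 = t ^ 2 * f ω ^ 2 := by ring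
    have hneg : Real.exp (-(t * f ω)) = Real.exp (-t * f ω) := by rw [neg_mul]
    rw [← hneg]
    nlinarith [h]
  have hfint : Integrable f P := by
    apply Integrable.mono' (hf2.add (integrable_const 1)) hf.aestronglyMeasurable
    refine ae_of_all _ fun ω => ?_
    simp only [Pi.add_apply]
    rw [Real.norm_eq_abs]
    nlinarith [sq_abs (f ω), sq_nonneg (|f ω| - 1)]
  have hmem2 : MemLp f 2 P := (memLp_two_iff_integrable_sq hf.aestronglyMeasurable).mpr hf2
  have hσ2 : σ2 = ∫ ω, (f ω - m) ^ 2 ∂P := by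
    rw [hσ2def, variance_eq_integral hf.aemeasurable]
  have hFint : Integrable (fun ω => f ω - m) P := hfint.sub (integrable_const m)
  have hF2int : Integrable (fun ω => (f ω - m) ^ 2) P := by
    have heq : (fun ω => (f ω - m) ^ 2) = fun ω => f ω ^ 2 - 2 * m * f ω + m ^ 2 := by
      funext ω; ring
    rw [heq]
    exact (hf2.sub (hfint.const_mul (2 * m))).add (integrable_const _)
  have hFmean : ∫ ω, (f ω - m) ∂P = 0 := by
    rw [integral_sub hfint (integrable_const m), integral_const]
    simp [hm]
  -- choice of parameters
  set q : ℝ := k ^ 2 / (2 * σ2) with hq_def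
  have hq0 : 0 ≤ q := div_nonneg (sq_nonneg k) (by linarith)
  have hq1 : q < 1 := by
    rw [hq_def, div_lt_one (by linarith)]
    have := (Real.lt_sqrt hk0).mp hk
    linarith
  set δ : ℝ := (1 - q) / 4 with hδ_def
  have hδ0 : 0 < δ := by rw [hδ_def]; linarith
  have hδ1 : δ < 1 := by rw [hδ_def]; linarith
  have hδ1' : 0 < 1 - δ := by linarith
  clear_value m σ2
  clear_value q δ
  -- dominated convergence to find truncation level M
  have hTend : Tendsto (fun n : ℕ =>
      ∫ ω, (max (-(n:ℝ)) (min (n:ℝ) (f ω - m))) * (f ω - m) ∂P) atTop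
      (𝓝 (∫ ω, (f ω - m) ^ 2 ∂P)) := by
    apply tendsto_integral_of_dominated_convergence (fun ω => (f ω - m) ^ 2)
    · intro n
      exact ((measurable_const.max (measurable_const.min
        (hf.sub measurable_const))).mul (hf.sub measurable_const)).aestronglyMeasurable
    · exact hF2int
    · intro n
      refine ae_of_all _ fun ω => ?_
      rw [Real.norm_eq_abs, abs_mul]
      calc |max (-(n:ℝ)) (min (n:ℝ) (f ω - m))| * |f ω - m|
          ≤ |f ω - m| * |f ω - m| :=
            mul_le_mul_of_nonneg_right (abs_clamp_le (Nat.cast_nonneg n)) (abs_nonneg _)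
        _ = (f ω - m) ^ 2 := by rw [← abs_mul, ← pow_two, abs_of_nonneg (sq_nonneg _)]
    · refine ae_of_all _ fun ω => ?_
      apply tendsto_atTop_of_eventually_const (i₀ := ⌈|f ω - m|⌉₊)
      intro n hn
      have h1 : |f ω - m| ≤ (n:ℝ) := by
        calc |f ω - m| ≤ (⌈|f ω - m|⌉₊ : ℝ) := Nat.le_ceil _
          _ ≤ (n:ℝ) := Nat.cast_le.mpr hn
      have h2 : f ω - m ≤ (n:ℝ) := le_trans (le_abs_self _) h1
      have h3 : -(n:ℝ) ≤ f ω - m := by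
        have := neg_abs_le (f ω - m); linarith
      rw [min_eq_right h2, max_eq_right h3, ← pow_two]
  have hρlt : (1 - δ) * σ2 < ∫ ω, (f ω - m) ^ 2 ∂P := by
    rw [← hσ2]
    have : (1 - δ) * σ2 < 1 * σ2 := mul_lt_mul_of_pos_right (by linarith) hvar
    linarith only [this]
  obtain ⟨M, haM, hM1⟩ :=
    ((hTend.eventually (eventually_gt_nhds hρlt)).and (eventually_ge_atTop 1)).exists
  have hM0 : (0:ℝ) < (M:ℝ) := by exact_mod_cast Nat.lt_of_lt_of_le Nat.zero_lt_one hM1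
  -- the truncated centered function g
  set T : Ω → ℝ := fun ω => max (-(M:ℝ)) (min (M:ℝ) (f ω - m)) with hT_def
  have hTmeas : Measurable T :=
    measurable_const.max (measurable_const.min (hf.sub measurable_const))
  have hTbdd : ∀ ω, |T ω| ≤ (M:ℝ) := by
    intro ω
    rw [abs_le]
    exact ⟨le_max_left _ _, max_le (by linarith) (min_le_left _ _)⟩
  have hTint : Integrable T P := integrable_of_bdd hTmeas.aestronglyMeasurable hTbdd
  set a : ℝ := ∫ ω, T ω * (f ω - m) ∂P with ha_def
  have haρ : (1 - δ) * σ2 < a := haM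
  have ha0 : 0 < a := lt_trans (mul_pos hδ1' hvar) haρ
  set c : ℝ := ∫ ω, T ω ∂P with hc_def
  have hc_abs : |c| ≤ (M:ℝ) := by
    have habs1 : |c| ≤ ∫ ω, |T ω| ∂P := by
      simpa [Real.norm_eq_abs] using norm_integral_le_integral_norm (μ := P) (f := T)
    have habs2 : (∫ ω, |T ω| ∂P) ≤ ∫ _ω, (M:ℝ) ∂P :=
      integral_mono hTint.abs (integrable_const _) hTbdd
    have habs3 : (∫ _ω, (M:ℝ) ∂P) = (M:ℝ) := by simp
    linarith
  set g : Ω → ℝ := fun ω => T ω - c with hg_def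
  have hgmeas : Measurable g := hTmeas.sub measurable_const
  have hgbdd : ∀ ω, |g ω| ≤ 2 * (M:ℝ) := by
    intro ω
    calc |g ω| ≤ |T ω| + |c| := abs_sub _ _
      _ ≤ 2 * (M:ℝ) := by have := hTbdd ω; linarith
  have hgint : Integrable g P := hTint.sub (integrable_const c)
  have hgmean : ∫ ω, g ω ∂P = 0 := by
    rw [hg_def]
    simp only []
    rw [integral_sub hTint (integrable_const c), integral_const]
    simp [hc_def]
  have hg2int : Integrable (fun ω => g ω ^ 2) P := by
    apply integrable_of_bdd (K := (2 * (M:ℝ)) ^ 2) (hgmeas.pow_const 2).aestronglyMeasurable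
    intro ω
    rw [abs_of_nonneg (sq_nonneg _), ← sq_abs]
    exact pow_le_pow_left₀ (abs_nonneg _) (hgbdd ω) 2
  set b : ℝ := ∫ ω, g ω ^ 2 ∂P with hb_def
  have hT2int : Integrable (fun ω => T ω ^ 2) P := by
    apply integrable_of_bdd (K := (M:ℝ) ^ 2) (hTmeas.pow_const 2).aestronglyMeasurable
    intro ω
    rw [abs_of_nonneg (sq_nonneg _), ← sq_abs]
    exact pow_le_pow_left₀ (abs_nonneg _) (hTbdd ω) 2
  have hbσ2 : b ≤ σ2 := by
    have h1 : b = (∫ ω, T ω ^ 2 ∂P) - c ^ 2 := by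
      have heq : ∀ ω, g ω ^ 2 = T ω ^ 2 - 2 * c * T ω + c ^ 2 := by
        intro ω; rw [hg_def]; ring
      have hi1 : Integrable (fun ω => T ω ^ 2 - 2 * c * T ω) P :=
        hT2int.sub (hTint.const_mul (2*c))
      rw [hb_def]
      rw [integral_congr_ae (ae_of_all _ heq)]
      rw [integral_add hi1 (integrable_const _),
        integral_sub hT2int (hTint.const_mul (2*c)), integral_const_mul, integral_const]
      simp [← hc_def]
      ring
    have h2 : (∫ ω, T ω ^ 2 ∂P) ≤ ∫ ω, (f ω - m) ^ 2 ∂P := by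
      apply integral_mono hT2int hF2int
      intro ω
      show T ω ^ 2 ≤ (f ω - m) ^ 2
      rw [← sq_abs (T ω), ← sq_abs (f ω - m)]
      exact pow_le_pow_left₀ (abs_nonneg _) (abs_clamp_le (le_of_lt hM0)) 2
    rw [hσ2]
    linarith only [h1, h2, sq_nonneg c]
  clear_value T a c g b
  -- the radius bound
  have hM2 : (0:ℝ) < (M:ℝ) ^ 2 := by positivity
  refine ⟨δ ^ 2 * σ2 / (8 * (M:ℝ) ^ 2),
    div_pos (mul_pos (pow_pos hδ0 2) hvar) (mul_pos (by norm_num) hM2), ?_⟩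
  rintro C ⟨hC0, hCC₀⟩
  set σ : ℝ := Real.sqrt σ2 with hσ_def
  have hσpos : 0 < σ := Real.sqrt_pos.mpr hvar
  set ε : ℝ := Real.sqrt (2 * (1 - δ) * C) / σ with hε_def
  have h2dC : (0:ℝ) < 2 * (1 - δ) * C := mul_pos (mul_pos (by norm_num) hδ1') hC0
  have hεpos : 0 < ε := by
    apply div_pos (Real.sqrt_pos.mpr h2dC) hσpos
  have hσsq : σ ^ 2 = σ2 := Real.sq_sqrt hvar.le
  have hε2 : ε ^ 2 * σ2 = 2 * (1 - δ) * C := by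
    rw [hε_def, div_pow, Real.sq_sqrt h2dC.le, hσsq]
    field_simp
  clear_value σ ε
  have hεg : ∀ ω, |ε * g ω| ≤ δ := by
    have h8 : C * (8 * (M:ℝ) ^ 2) < δ ^ 2 * σ2 := by
      rw [← lt_div_iff₀ (mul_pos (by norm_num : (0:ℝ) < 8) hM2)]
      exact hCC₀
    have h1 : (ε * (2 * (M:ℝ))) ^ 2 < δ ^ 2 := by
      have e1 : (ε * (2 * (M:ℝ))) ^ 2 * σ2 = (2 * (1 - δ) * C) * (4 * (M:ℝ) ^ 2) := by
        have e0 : (ε * (2 * (M:ℝ))) ^ 2 * σ2 = (ε ^ 2 * σ2) * (4 * (M:ℝ) ^ 2) := by ring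
        rw [e0, hε2]
      have h2 : (ε * (2 * (M:ℝ))) ^ 2 * σ2 < δ ^ 2 * σ2 := by
        rw [e1]
        have hδCM : 0 ≤ δ * (C * (M:ℝ) ^ 2) :=
          mul_nonneg hδ0.le (mul_nonneg hC0.le hM2.le)
        have e2 : 2 * (1 - δ) * C * (4 * (M:ℝ) ^ 2)
            = C * (8 * (M:ℝ) ^ 2) - 8 * (δ * (C * (M:ℝ) ^ 2)) := by ring
        rw [e2]
        linarith only [h8, hδCM]
      exact (mul_lt_mul_iff_left₀ hvar).mp h2
    have h2 : ε * (2 * (M:ℝ)) < δ :=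
      lt_of_pow_lt_pow_left₀ 2 hδ0.le h1
    intro ω
    rw [abs_mul, abs_of_pos hεpos]
    calc ε * |g ω| ≤ ε * (2 * (M:ℝ)) := mul_le_mul_of_nonneg_left (hgbdd ω) hεpos.le
      _ ≤ δ := h2.le
  -- the perturbed density and measure
  set dens : Ω → ℝ := fun ω => 1 + ε * g ω with hdens_def
  have hd_meas : Measurable dens := measurable_const.add (hgmeas.const_mul ε)
  have hd_lb : ∀ ω, 1 - δ ≤ dens ω := by
    intro ω; have := (abs_le.mp (hεg ω)).1; rw [hdens_def]; simp only []; linarith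
  have hd_ub : ∀ ω, dens ω ≤ 2 := by
    intro ω; have := (abs_le.mp (hεg ω)).2; rw [hdens_def]; simp only []; linarith
  have hd_pos : ∀ ω, 0 < dens ω := fun ω => lt_of_lt_of_le hδ1' (hd_lb ω)
  have hdint : Integrable dens P := by
    apply integrable_of_bdd (K := 2) hd_meas.aestronglyMeasurable
    intro ω
    rw [abs_le]
    exact ⟨by have := hd_pos ω; linarith, hd_ub ω⟩
  have hdmean : ∫ ω, dens ω ∂P = 1 := by
    rw [hdens_def]
    simp only []
    rw [integral_add (integrable_const 1) (hgint.const_mul ε), integral_const,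
      integral_const_mul, hgmean]
    simp
  clear_value dens
  set Q : Measure Ω := P.withDensity (fun ω => ENNReal.ofReal (dens ω)) with hQ_def
  have hQd : Q = P.withDensity (fun ω => ((dens ω).toNNReal : ℝ≥0∞)) := rfl
  have hint_Q : ∀ h : Ω → ℝ, ∫ ω, h ω ∂Q = ∫ ω, dens ω * h ω ∂P := by
    intro h
    rw [hQd, integral_withDensity_eq_integral_smul hd_meas.real_toNNReal]
    apply integral_congr_ae
    refine ae_of_all _ fun ω => ?_
    show ((dens ω).toNNReal : ℝ≥0) • h ω = dens ω * h ω
    rw [NNReal.smul_def, Real.coe_toNNReal _ (hd_pos ω).le, smul_eq_mul]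
  have hQprob : IsProbabilityMeasure Q := by
    constructor
    rw [hQ_def, withDensity_apply _ MeasurableSet.univ, Measure.restrict_univ,
      ← ofReal_integral_eq_lintegral_ofReal hdint (ae_of_all _ fun ω => (hd_pos ω).le),
      hdmean]
    simp
  haveI := hQprob
  have hQP : Q ≪ P := withDensity_absolutelyContinuous _ _
  -- the mean of f under Q
  have hgf_int : Integrable (fun ω => g ω * f ω) P :=
    hfint.bdd_mul hgmeas.aestronglyMeasurable
      (ae_of_all _ fun ω => by rw [Real.norm_eq_abs]; exact hgbdd ω)
  have hTF_int : Integrable (fun ω => T ω * (f ω - m)) P :=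
    hFint.bdd_mul hTmeas.aestronglyMeasurable
      (ae_of_all _ fun ω => by rw [Real.norm_eq_abs]; exact hTbdd ω)
  have hgfa : ∫ ω, g ω * f ω ∂P = a := by
    have heq : ∀ ω, g ω * f ω = T ω * (f ω - m) - c * (f ω - m) + m * g ω := by
      intro ω; rw [hg_def]; ring
    have hi1 : Integrable (fun ω => T ω * (f ω - m) - c * (f ω - m)) P :=
      hTF_int.sub (hFint.const_mul c)
    rw [integral_congr_ae (ae_of_all _ heq),
      integral_add hi1 (hgint.const_mul m),
      integral_sub hTF_int (hFint.const_mul c), integral_const_mul, integral_const_mul,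
      hFmean, hgmean, ha_def]
    ring
  have hmean : ∫ ω, f ω ∂Q = m + ε * a := by
    rw [hint_Q f]
    have heq : ∀ ω, dens ω * f ω = f ω + ε * (g ω * f ω) := by
      intro ω; rw [hdens_def]; ring
    rw [integral_congr_ae (ae_of_all _ heq),
      integral_add hfint (hgf_int.const_mul ε), integral_const_mul, hgfa, ← hm]
  -- the KL divergence bound
  have hrn : Q.rnDeriv P =ᵐ[P] fun ω => ENNReal.ofReal (dens ω) :=
    Measure.rnDeriv_withDensity P (hd_meas.ennreal_ofReal)
  clear_value Q
  have hllr_P : llr Q P =ᵐ[P] fun ω => Real.log (dens ω) := by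
    filter_upwards [hrn] with ω hω
    rw [llr_def]
    simp only []
    rw [hω, ENNReal.toReal_ofReal (hd_pos ω).le]
  have hllr_Q : llr Q P =ᵐ[Q] fun ω => Real.log (dens ω) :=
    hllr_P.filter_mono hQP.ae_le
  set K : ℝ := Real.log 2 - Real.log (1 - δ) with hK_def
  have hlog2 : (0:ℝ) ≤ Real.log 2 := Real.log_nonneg (by norm_num)
  have hlog1δ : Real.log (1 - δ) ≤ 0 := Real.log_nonpos (by linarith) (by linarith)
  have hlogbdd : ∀ ω, |Real.log (dens ω)| ≤ K := by
    intro ω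
    rw [abs_le]
    constructor
    · have h := Real.log_le_log hδ1' (hd_lb ω)
      rw [hK_def]; linarith
    · have h := Real.log_le_log (hd_pos ω) (hd_ub ω)
      rw [hK_def]; linarith
  have hlogint : Integrable (fun ω => Real.log (dens ω)) Q :=
    integrable_of_bdd (Real.measurable_log.comp hd_meas).aestronglyMeasurable hlogbdd
  have hllr_int : Integrable (llr Q P) Q := hlogint.congr hllr_Q.symm
  have hdld_int : Integrable (fun ω => dens ω * Real.log (dens ω)) P := by
    apply integrable_of_bdd (K := 2 * K)
      (hd_meas.mul (Real.measurable_log.comp hd_meas)).aestronglyMeasurable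
    intro ω
    show |dens ω * Real.log (dens ω)| ≤ 2 * K
    rw [abs_mul]
    have h1 : |dens ω| ≤ 2 := abs_le.mpr ⟨by have := hd_pos ω; linarith, hd_ub ω⟩
    have h2 := hlogbdd ω
    exact mul_le_mul h1 h2 (abs_nonneg _) (by norm_num)
  have hKLle : ∫ ω, llr Q P ω ∂Q ≤ C := by
    rw [integral_congr_ae hllr_Q, hint_Q (fun ω => Real.log (dens ω))]
    have hpt : (fun ω => dens ω * Real.log (dens ω)) ≤
        fun ω => ε * g ω + (ε ^ 2 / (2 * (1 - δ))) * g ω ^ 2 := by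
      intro ω
      have h := entropy_quad_bound hδ0 hδ1 (hεg ω)
      calc dens ω * Real.log (dens ω)
          = (1 + ε * g ω) * Real.log (1 + ε * g ω) := by rw [hdens_def]
        _ ≤ ε * g ω + (ε * g ω) ^ 2 / (2 * (1 - δ)) := h
        _ = ε * g ω + (ε ^ 2 / (2 * (1 - δ))) * g ω ^ 2 := by ring
    have hRint : Integrable (fun ω => ε * g ω + (ε ^ 2 / (2 * (1 - δ))) * g ω ^ 2) P :=
      (hgint.const_mul ε).add (hg2int.const_mul _)
    have hmono := integral_mono hdld_int hRint hpt
    have hRval : ∫ ω, (ε * g ω + (ε ^ 2 / (2 * (1 - δ))) * g ω ^ 2) ∂P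
        = (ε ^ 2 / (2 * (1 - δ))) * b := by
      rw [integral_add (hgint.const_mul ε) (hg2int.const_mul _), integral_const_mul,
        integral_const_mul, hgmean, hb_def]
      ring
    rw [hRval] at hmono
    have hfinal : (ε ^ 2 / (2 * (1 - δ))) * b ≤ C := by
      have hcoef : ε ^ 2 / (2 * (1 - δ)) = C / σ2 := by
        rw [div_eq_div_iff (ne_of_gt (mul_pos (by norm_num : (0:ℝ) < 2) hδ1')) (ne_of_gt hvar)]
        linear_combination hε2
      rw [hcoef, div_mul_eq_mul_div, div_le_iff₀ hvar]
      exact mul_le_mul_of_nonneg_left hbσ2 hC0.le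
    linarith
  have hKL : klDiv Q P ≤ (C : EReal) := by
    rw [klDiv, if_pos ⟨hQP, hllr_int⟩]
    exact_mod_cast hKLle
  -- membership and boundedness
  set S : Set ℝ := { x : ℝ | ∃ Q' : Measure Ω, IsProbabilityMeasure Q' ∧ Q' ≪ P ∧
    klDiv Q' P ≤ (C : EReal) ∧ x = ∫ ω, f ω ∂Q' } with hS_def
  have hmemS : m + ε * a ∈ S := ⟨Q, hQprob, hQP, hKL, hmean.symm⟩
  have hbdd : BddAbove S := by
    refine ⟨max 0 ((C + (∫ ω, Real.exp (t * f ω) ∂P) - 1) / t), ?_⟩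
    rintro x ⟨Q', hQ'prob, hQ'P, hQ'KL, rfl⟩
    haveI := hQ'prob
    have hpair : Q' ≪ P ∧ Integrable (llr Q' P) Q' := by
      by_contra hcon
      rw [klDiv, if_neg hcon] at hQ'KL
      exact absurd hQ'KL (by simp)
    have hKL' : ∫ ω, llr Q' P ω ∂Q' ≤ C := by
      rw [klDiv, if_pos hpair] at hQ'KL
      exact_mod_cast hQ'KL
    by_cases hfi : Integrable f Q'
    · exact le_max_of_le_right (dv_bound P Q' ht0 hexp hpair.1 hpair.2 hKL' hfi)
    · rw [integral_undef hfi]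
      exact le_max_left _ _
  -- final strict inequality
  have hgt : m + k * Real.sqrt C < m + ε * a := by
    have hq2 : q * q ≤ q := by
      have := mul_le_mul_of_nonneg_left hq1.le hq0
      linarith only [this]
    have hfac : 0 < (1 - q) * (27 - 10 * q - q * q) :=
      mul_pos (by linarith) (by linarith only [hq2, hq1, hq0])
    have h1δ3 : q < (1 - δ) ^ 3 := by
      rw [hδ_def]
      have e : (1 - (1 - q) / 4) ^ 3 - q = (1 - q) * (27 - 10 * q - q * q) / 64 := by ring
      linarith only [hfac, e]
    have hk2q : k ^ 2 = q * (2 * σ2) := by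
      rw [hq_def]; field_simp
    have ha2 : ((1 - δ) * σ2) * ((1 - δ) * σ2) < a * a :=
      mul_lt_mul'' haρ haρ (mul_nonneg hδ1'.le hvar.le) (mul_nonneg hδ1'.le hvar.le)
    have key : k ^ 2 * σ2 < 2 * (1 - δ) * a ^ 2 := by
      calc k ^ 2 * σ2 = q * (2 * σ2) * σ2 := by rw [hk2q]
        _ < (1 - δ) ^ 3 * (2 * σ2) * σ2 :=
            mul_lt_mul_of_pos_right (mul_lt_mul_of_pos_right h1δ3 (by linarith)) hvar
        _ = 2 * (1 - δ) * (((1 - δ) * σ2) * ((1 - δ) * σ2)) := by ring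
        _ < 2 * (1 - δ) * (a * a) :=
            mul_lt_mul_of_pos_left ha2 (by linarith)
        _ = 2 * (1 - δ) * a ^ 2 := by ring
    have hsq : (k * Real.sqrt C) ^ 2 < (ε * a) ^ 2 := by
      rw [mul_pow, mul_pow, Real.sq_sqrt hC0.le]
      have s4 : k ^ 2 * σ2 * C < 2 * (1 - δ) * a ^ 2 * C :=
        mul_lt_mul_of_pos_right key hC0
      have s5 : ε ^ 2 * a ^ 2 * σ2 = 2 * (1 - δ) * a ^ 2 * C := by
        calc ε ^ 2 * a ^ 2 * σ2 = (ε ^ 2 * σ2) * a ^ 2 := by ring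
          _ = 2 * (1 - δ) * C * a ^ 2 := by rw [hε2]
          _ = 2 * (1 - δ) * a ^ 2 * C := by ring
      have s6 : k ^ 2 * C * σ2 < ε ^ 2 * a ^ 2 * σ2 := by
        have e7 : k ^ 2 * C * σ2 = k ^ 2 * σ2 * C := by ring
        rw [e7, s5]
        exact s4
      exact (mul_lt_mul_iff_left₀ hvar).mp s6
    have := lt_of_pow_lt_pow_left₀ 2 (mul_nonneg hεpos.le ha0.le) hsq
    linarith
  calc m + k * Real.sqrt C < m + ε * a := hgt
    _ ≤ robustValue P f C := le_csSup hbdd hmemS
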